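/- REG/n is not contained in (REG/n)_serial: there exists a language, namely L_eq = { 0ⁿ 1ⁿ : n ∈ ℕ } over the alphabet {0,1}, that belongs to REG/n but does not belong to (REG/n)_serial. -/

import Mathlib

/-- L_eq = { 0ⁿ 1ⁿ : n ∈ ℕ } over the alphabet {0,1} (as `Fin 2`). -/
def Leq : Language (Fin 2) :=
  {s | ∃ n : ℕ, s = List.replicate n 0 ++ List.replicate n 1}

/-- `L` belongs to REG/n (parallel length-respecting advice). -/
def InREGAdviceParallel {T : Type} (L : Language T) : Prop :=
  ∃ (Γ : Type) (_ : Fintype Γ) (h : ℕ → List Γ) (L' : Language (T × Γ)),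
    (∀ n, (h n).length = n) ∧ L'.IsRegular ∧
      ∀ x : List T, x ∈ L ↔ x.zip (h x.length) ∈ L'

/-- `L` belongs to (REG/n)_serial (serial length-respecting advice). -/
def InREGAdviceSerial {T : Type} (L : Language T) : Prop :=
  ∃ (Γ₀ : Type) (_ : Fintype Γ₀) (g : ℕ → List Γ₀) (L'' : Language (Γ₀ ⊕ T)),
    (∀ n, (g n).length = n) ∧ L''.IsRegular ∧
      ∀ x : List T, x ∈ L ↔ (g x.length).map Sum.inl ++ x.map Sum.inr ∈ L''


-- aux: regularity of "all elements satisfy P"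
lemma isRegular_all {α : Type} (P : α → Prop) [DecidablePred P] :
    Language.IsRegular {w : List α | ∀ a ∈ w, P a} := by
  refine ⟨Bool, inferInstance, ⟨fun b a => b && decide (P a), true, {true}⟩, ?_⟩
  have hfold : ∀ (x : List α) (b : Bool),
      x.foldl (fun b a => b && decide (P a)) b = (b && x.all fun a => decide (P a)) := by
    intro x
    induction x with
    | nil => simp
    | cons a x ih => intro b; simp [ih, Bool.and_assoc]
  ext x
  simp only [DFA.mem_accepts, DFA.eval, DFA.evalFrom, hfold, Set.mem_setOf_eq,
    Set.mem_singleton_iff, Bool.true_and, List.all_eq_true, decide_eq_true_iff]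
  exact Iff.rfl

lemma zip_val_iff : ∀ (x : List (Fin 2)) (y : List (Fin 3)), x.length = y.length →
    ((∀ p ∈ x.zip y, ((p.1 : Fin 2) : ℕ) = ((p.2 : Fin 3) : ℕ)) ↔
      x.map Fin.val = y.map Fin.val)
  | [], [], _ => by simp
  | a :: x, b :: y, h => by
    simp only [List.length_cons, Nat.succ.injEq] at h
    simp only [List.zip_cons_cons, List.mem_cons, List.map_cons, List.cons.injEq, forall_eq_or_imp]
    exact and_congr Iff.rfl (zip_val_iff x y h)

def hAdv : ℕ → List (Fin 3) := fun n =>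
  if Even n then List.replicate (n/2) 0 ++ List.replicate (n/2) 1 else List.replicate n 2

lemma hAdv_length (n : ℕ) : (hAdv n).length = n := by
  unfold hAdv
  split
  · rename_i he
    obtain ⟨m, rfl⟩ := he
    simp; omega
  · simp

theorem part1 : ∃ (Γ : Type) (_ : Fintype Γ) (h : ℕ → List Γ) (L' : Language ((Fin 2) × Γ)),
    (∀ n, (h n).length = n) ∧ L'.IsRegular ∧
      ∀ x : List (Fin 2), x ∈ Leq ↔ x.zip (h x.length) ∈ L' := by
  refine ⟨Fin 3, inferInstance, hAdv,
    {w | ∀ p ∈ w, ((p.1 : Fin 2) : ℕ) = ((p.2 : Fin 3) : ℕ)}, hAdv_length,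
    isRegular_all _, fun x => ?_⟩
  have hlen : x.length = (hAdv x.length).length := (hAdv_length x.length).symm
  have key := zip_val_iff x (hAdv x.length) hlen
  constructor
  · rintro ⟨m, rfl⟩
    intro p hp
    have hn : (List.replicate m (0 : Fin 2) ++ List.replicate m 1).length = m + m := by simp
    have heven : Even (m + m) := ⟨m, rfl⟩
    have hdiv : (m + m) / 2 = m := by omega
    apply key.mpr _ p hp
    rw [hn]
    unfold hAdv
    rw [if_pos heven, hdiv]
    simp
  · intro H
    have hmap := key.mp H
    by_cases he : Even x.length
    · obtain ⟨m, hm⟩ := he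
      have hdiv : x.length / 2 = m := by omega
      rw [show hAdv x.length = List.replicate m 0 ++ List.replicate m 1 by
        unfold hAdv; rw [if_pos ⟨m, hm⟩, hdiv]] at hmap
      refine ⟨m, List.map_injective_iff.mpr Fin.val_injective ?_⟩
      rw [hmap]
      simp
    · exfalso
      rw [show hAdv x.length = List.replicate x.length 2 by unfold hAdv; rw [if_neg he]] at hmap
      have hpos : 0 < x.length := by
        rcases Nat.eq_zero_or_pos x.length with h0 | h0
        · exact absurd (h0 ▸ Even.zero) he
        · exact h0
      have h2 : (2 : ℕ) ∈ x.map Fin.val := by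
        rw [hmap]
        simp only [List.map_replicate, List.mem_replicate]
        exact ⟨hpos.ne', rfl⟩
      obtain ⟨a, _, ha⟩ := List.mem_map.mp h2
      have := a.isLt
      omega

lemma join_replicate {α : Type} (i t : ℕ) (z : α) :
    (List.replicate i (List.replicate t z)).flatten = List.replicate (i * t) z := by
  induction i with
  | zero => simp
  | succ i ih =>
    rw [List.replicate_succ, List.flatten_cons, ih, ← List.replicate_add, Nat.succ_mul,
      Nat.add_comm]

theorem part2 : ¬ ∃ (Γ₀ : Type) (_ : Fintype Γ₀) (g : ℕ → List Γ₀)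
      (L'' : Language (Γ₀ ⊕ Fin 2)),
    (∀ n, (g n).length = n) ∧ L''.IsRegular ∧
      ∀ x : List (Fin 2), x ∈ Leq ↔ (g x.length).map Sum.inl ++ x.map Sum.inr ∈ L'' := by
  rintro ⟨Γ₀, _inst, g, L'', hg, ⟨σ, instσ, M, hM⟩, hiff⟩
  classical
  set s := Fintype.card σ with hs
  let f : ℕ → σ × Fin s.factorial := fun n =>
    (M.eval ((g (2 * n)).map Sum.inl), ⟨n % s.factorial, Nat.mod_lt _ s.factorial_pos⟩)
  obtain ⟨a, b, hab, hfab⟩ := Finite.exists_ne_map_eq_of_infinite (fun n : ℕ => f (n + s))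
  set n := min a b + s with hn
  set n' := max a b + s with hn'
  have hnn' : n < n' := by omega
  have hsn : s ≤ n := by omega
  have hf : f n = f n' := by
    rcases le_total a b with h | h
    · rw [hn, hn', min_eq_left h, max_eq_right h]; exact hfab
    · rw [hn, hn', min_eq_right h, max_eq_left h]; exact hfab.symm
  have hq : M.eval ((g (2 * n)).map Sum.inl) = M.eval ((g (2 * n')).map Sum.inl) :=
    congrArg Prod.fst hf
  have hmod : n % s.factorial = n' % s.factorial := by
    have h2 := congrArg Prod.snd hf
    simpa [f, Fin.ext_iff] using h2
  have hdvd : s.factorial ∣ n' - n := (Nat.modEq_iff_dvd' hnn'.le).mp hmod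
  set q := M.eval ((g (2 * n)).map Sum.inl) with hqdef
  set N : DFA (Γ₀ ⊕ Fin 2) σ := ⟨M.step, q, M.accept⟩ with hNdef
  have hN : ∀ (x : List (Fin 2)) (m : ℕ), x.length = 2 * m →
      M.eval ((g (2 * m)).map Sum.inl) = q → (x ∈ Leq ↔ x.map Sum.inr ∈ N.accepts) := by
    intro x m hxm hqm
    have h1 := hiff x
    rw [hxm] at h1
    rw [h1, ← hM, DFA.mem_accepts, DFA.mem_accepts]
    show M.evalFrom M.start _ ∈ _ ↔ N.evalFrom N.start _ ∈ _
    rw [DFA.evalFrom_of_append]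
    have : M.evalFrom M.start ((g (2 * m)).map Sum.inl) = q := hqm
    rw [this]
    rfl
  have h0 : (List.replicate n (0 : Fin 2) ++ List.replicate n 1) ∈ Leq := ⟨n, rfl⟩
  have hy : (List.replicate n (0 : Fin 2) ++ List.replicate n 1).map Sum.inr ∈ N.accepts :=
    (hN _ n (by simp; omega) rfl).mp h0
  have hylen : Fintype.card σ ≤
      ((List.replicate n (0 : Fin 2) ++ List.replicate n 1).map
        (Sum.inr : Fin 2 → Γ₀ ⊕ Fin 2)).length := by
    simp; omega
  obtain ⟨A, B, C, hsplit, hABlen, hBne, hpump⟩ := N.pumping_lemma hy hylen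
  set t := B.length with ht
  have htpos : 0 < t := List.length_pos_iff.mpr hBne
  have hts : t ≤ s := le_trans (Nat.le_add_left _ _) hABlen
  have htdvd : t ∣ n' - n := dvd_trans (Nat.dvd_factorial htpos hts) hdvd
  set z : Γ₀ ⊕ Fin 2 := Sum.inr 0 with hz
  set o : Γ₀ ⊕ Fin 2 := Sum.inr 1 with ho
  have hy2 : (List.replicate n (0 : Fin 2) ++ List.replicate n 1).map Sum.inr
      = List.replicate n z ++ List.replicate n o := by simp [hz, ho]
  rw [hy2] at hsplit
  have hABn : A.length + B.length ≤ n := le_trans hABlen hsn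
  have hAB : A ++ B = List.replicate (A.length + B.length) z := by
    have h1 : (A ++ B ++ C).take (A.length + B.length) = A ++ B := by
      have := List.take_left (l₁ := A ++ B) (l₂ := C)
      simpa using this
    rw [← hsplit] at h1
    rw [List.take_append_of_le_length (by simpa using hABn), List.take_replicate,
      min_eq_left hABn] at h1
    exact h1.symm
  have hA : A = List.replicate A.length z := by
    have := congrArg (List.take A.length) hAB
    rw [List.take_left, List.take_replicate, min_eq_left (Nat.le_add_right _ _)] at this
    exact this
  have hB : B = List.replicate t z := by
    have := congrArg (List.drop A.length) hAB
    rw [List.drop_left, List.drop_replicate, Nat.add_sub_cancel_left] at this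
    exact this
  have hC : C = List.replicate (n - (A.length + t)) z ++ List.replicate n o := by
    have h1 := congrArg (List.drop (A.length + B.length)) hsplit
    rw [List.drop_append_of_le_length (by simpa using hABn), List.drop_replicate] at h1
    have h2 : (A ++ B ++ C).drop (A.length + B.length) = C := by
      have := List.drop_left (l₁ := A ++ B) (l₂ := C)
      simpa using this
    rw [h2] at h1
    simpa using h1.symm
  set D := 2 * ((n' - n) / t) with hD
  have hDt : D * t = 2 * (n' - n) := by
    rw [hD, Nat.mul_assoc, Nat.div_mul_cancel htdvd]
  have hDtpos : 0 < D * t := by omega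
  have hw : A ++ (List.replicate (D + 1) B).flatten ++ C ∈ N.accepts := by
    apply hpump
    refine Language.mem_mul.mpr ⟨A ++ (List.replicate (D + 1) B).flatten,
      Language.mem_mul.mpr ⟨A, rfl, (List.replicate (D + 1) B).flatten,
        Language.join_mem_kstar ?_, rfl⟩, C, rfl, by simp⟩
    intro y hy'
    rw [List.eq_of_mem_replicate hy']
    rfl
  set w' := List.replicate (n + D * t) (0 : Fin 2) ++ List.replicate n 1 with hw'
  have hwform : A ++ (List.replicate (D + 1) B).flatten ++ C = w'.map Sum.inr := by
    rw [hB, join_replicate]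
    conv_lhs => rw [hA, hC]
    rw [hw']
    have hrhs : (List.replicate (n + D * t) (0 : Fin 2) ++ List.replicate n 1).map Sum.inr
        = List.replicate (n + D * t) z ++ List.replicate n o := by simp [hz, ho]
    rw [hrhs]
    rw [List.append_assoc, ← List.append_assoc (List.replicate ((D+1)*t) z),
      ← List.replicate_add, ← List.append_assoc, ← List.replicate_add]
    congr 2
    rw [Nat.add_mul, Nat.one_mul]
    omega
  have hw'len : w'.length = 2 * n' := by
    rw [hw']
    simp
    omega
  have hw'Leq : w' ∈ Leq := by
    refine (hN w' n' hw'len hq.symm).mpr ?_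
    rw [← hwform]
    exact hw
  obtain ⟨k, hk⟩ := hw'Leq
  have c1 : w'.count 1 = n := by
    rw [hw']
    simp [List.count_append, List.count_replicate]
  have c0 : w'.count 0 = n + D * t := by
    rw [hw']
    simp [List.count_append, List.count_replicate]
  rw [hk] at c1 c0
  simp [List.count_append, List.count_replicate] at c1 c0
  omega

/-- REG/n is not contained in (REG/n)_serial: L_eq witnesses the separation. -/
theorem REG_advice_not_subset_serial :
    InREGAdviceParallel Leq ∧ ¬ InREGAdviceSerial Leq := by
  constructor
  · exact part1
  · intro h
    exact part2 h
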